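/- Let B be an invertible real 2×2 matrix, a ∈ ℝ², F(x̂) = B x̂ + a, and J := det B. Let Û ⊆ ℝ² be open. Let Ξ̂ : Û → ℝ^{2×2} be continuously differentiable with Piola–Kirchhoff transform Ξ (Ξ(F(x̂)) := |J|⁻¹ B Ξ̂(x̂) Bᵀ), let τ̂ : Û → ℝ² have Piola transform τ (τ(F(x̂)) := |J|⁻¹ B τ̂(x̂)), let û : Û → ℝ be differentiable, and set u := û ∘ F⁻¹. Then for every x̂ ∈ Û, |J| · ∇u(F(x̂)) · ((Div Ξ)(F(x̂)) − τ(F(x̂))) = ∇û(x̂) · ((Div Ξ̂)(x̂) − τ̂(x̂)). -/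

import Mathlib

open Matrix
/-- The `i`-th partial derivative of a scalar field on `ℝ²`. -/
noncomputable def pd (i : Fin 2) (f : (Fin 2 → ℝ) → ℝ) (x : Fin 2 → ℝ) : ℝ :=
  fderiv ℝ f x (Pi.single i 1)

/-- The gradient `∇f = (∂₁f, ∂₂f)` of a scalar field on `ℝ²`. -/
noncomputable def gradF (f : (Fin 2 → ℝ) → ℝ) (x : Fin 2 → ℝ) : Fin 2 → ℝ :=
  fun i => pd i f x

/-- The row-wise divergence `(Div N)_i = Σ_j ∂_j N_{ij}` of a matrix field. -/
noncomputable def DivMat (N : (Fin 2 → ℝ) → Matrix (Fin 2) (Fin 2) ℝ)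
    (x : Fin 2 → ℝ) : Fin 2 → ℝ :=
  fun i => ∑ j : Fin 2, pd j (fun y => N y i j) x

set_option maxHeartbeats 2000000

/-- For the Piola–Kirchhoff transform `Ξ` of `Ξ̂`, the Piola transform `τ`
of `τ̂` and `u = û ∘ F⁻¹`, one has
`|J| ∇u(F x̂) · ((Div Ξ)(F x̂) − τ(F x̂)) = ∇û(x̂) · ((Div Ξ̂)(x̂) − τ̂(x̂))`
(Lemma 9, second transformation relation, smooth case).
Here `Xihat` plays the role of `Ξ̂`, `tauhat` of `τ̂`, `uhat` of `û`, `Uhat` of `Û`,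
`xhat` of `x̂`. -/
theorem stmt9
    (B : Matrix (Fin 2) (Fin 2) ℝ) (hB : IsUnit B.det) (a : Fin 2 → ℝ)
    (F : (Fin 2 → ℝ) → (Fin 2 → ℝ)) (hF : ∀ xhat, F xhat = B.mulVec xhat + a)
    (Uhat : Set (Fin 2 → ℝ)) (hUhat : IsOpen Uhat)
    (Xihat Ξ : (Fin 2 → ℝ) → Matrix (Fin 2) (Fin 2) ℝ)
    (hsmooth : ∀ i j : Fin 2, ContDiffOn ℝ 1 (fun x => Xihat x i j) Uhat)
    (hXi : ∀ xhat ∈ Uhat, Ξ (F xhat) = |B.det|⁻¹ • (B * Xihat xhat * B.transpose))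
    (tauhat τ : (Fin 2 → ℝ) → (Fin 2 → ℝ))
    (htau : ∀ xhat ∈ Uhat, τ (F xhat) = |B.det|⁻¹ • B.mulVec (tauhat xhat))
    (uhat u : (Fin 2 → ℝ) → ℝ)
    (huhat : DifferentiableOn ℝ uhat Uhat)
    (hu : ∀ xhat ∈ Uhat, u (F xhat) = uhat xhat) :
    ∀ xhat ∈ Uhat,
      |B.det| * (gradF u (F xhat) ⬝ᵥ (DivMat Ξ (F xhat) - τ (F xhat)))
        = gradF uhat xhat ⬝ᵥ (DivMat Xihat xhat - tauhat xhat) := by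
  intro xhat hx
  have hd : B.det ≠ 0 := by
    intro h; rw [h] at hB; exact (by norm_num : ¬ IsUnit (0:ℝ)) hB
  have hs : |B.det| ≠ 0 := abs_ne_zero.mpr hd
  have hBi : B⁻¹ * B = 1 := Matrix.nonsing_inv_mul B hB
  have hBi' : B * B⁻¹ = 1 := Matrix.mul_nonsing_inv B hB
  set G : (Fin 2 → ℝ) → (Fin 2 → ℝ) := fun y => B⁻¹.mulVec (y - a) with hGdef
  have hGF : ∀ x, G (F x) = x := by
    intro x
    simp only [hGdef, hF, add_sub_cancel_right, Matrix.mulVec_mulVec, hBi, Matrix.one_mulVec]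
  have hFG : ∀ y, F (G y) = y := by
    intro y
    simp only [hGdef, hF, Matrix.mulVec_mulVec, hBi', Matrix.one_mulVec]
    abel
  set L' : (Fin 2 → ℝ) →L[ℝ] (Fin 2 → ℝ) :=
    LinearMap.toContinuousLinearMap (Matrix.mulVecLin B⁻¹) with hL'def
  have hG : ∀ y, HasFDerivAt G L' y := by
    intro y
    have h1 : HasFDerivAt (fun z => L' z - L' a) L' y := (L'.hasFDerivAt).sub_const (L' a)
    convert h1 using 2 with z
    simp [hGdef, hL'def, Matrix.mulVec_sub]
  have hGcont : Continuous G := by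
    exact continuous_iff_continuousAt.mpr fun y => (hG y).continuousAt
  have hVopen : IsOpen (F '' Uhat) := by
    have heq : F '' Uhat = G ⁻¹' Uhat := by
      ext y
      constructor
      · rintro ⟨z, hz, rfl⟩; simpa [hGF] using hz
      · intro hy; exact ⟨G y, hy, hFG y⟩
    rw [heq]; exact hUhat.preimage hGcont
  -- key transformation for partial derivatives
  have key : ∀ (f g : (Fin 2 → ℝ) → ℝ) (D : (Fin 2 → ℝ) →L[ℝ] ℝ),
      HasFDerivAt f D xhat → (∀ y ∈ Uhat, g (F y) = f y) →
      ∀ j, pd j g (F xhat) = D (B⁻¹.mulVec (Pi.single j 1)) := by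
    intro f g D hf hg j
    have hev : g =ᶠ[nhds (F xhat)] (f ∘ G) := by
      refine Filter.eventuallyEq_of_mem (hVopen.mem_nhds ⟨xhat, hx, rfl⟩) ?_
      rintro y ⟨z, hz, rfl⟩
      simp [Function.comp, hGF, hg z hz]
    have hf' : HasFDerivAt f D (G (F xhat)) := by rw [hGF]; exact hf
    have hcomp : HasFDerivAt (f ∘ G) (D.comp L') (F xhat) :=
      HasFDerivAt.comp (F xhat) hf' (hG (F xhat))
    have hg' : HasFDerivAt g (D.comp L') (F xhat) := hcomp.congr_of_eventuallyEq hev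
    rw [pd, hg'.fderiv]
    simp [hL'def]
  -- derivative of uhat
  have hud : DifferentiableAt ℝ uhat xhat :=
    (huhat.differentiableAt (hUhat.mem_nhds hx))
  set Du : (Fin 2 → ℝ) →L[ℝ] ℝ := fderiv ℝ uhat xhat with hDudef
  have hDu : HasFDerivAt uhat Du xhat := hud.hasFDerivAt
  -- derivatives of Xihat components
  set E : Fin 2 → Fin 2 → ((Fin 2 → ℝ) →L[ℝ] ℝ) :=
    fun p q => fderiv ℝ (fun y => Xihat y p q) xhat with hEdef
  have hE : ∀ p q, HasFDerivAt (fun y => Xihat y p q) (E p q) xhat := by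
    intro p q
    exact (((hsmooth p q).differentiableOn one_ne_zero).differentiableAt
      (hUhat.mem_nhds hx)).hasFDerivAt
  -- gradient of u at F xhat
  have hgu : ∀ i, gradF u (F xhat) i = Du (B⁻¹.mulVec (Pi.single i 1)) := by
    intro i; exact key uhat u Du hDu hu i
  -- Div of Ξ at F xhat
  have hpdXi : ∀ i j, pd j (fun y => Ξ y i j) (F xhat)
      = (∑ q : Fin 2, ∑ p : Fin 2, (|B.det|⁻¹ * B i p * B j q) • E p q)
          (B⁻¹.mulVec (Pi.single j 1)) := by
    intro i j
    refine key (fun y => ∑ q : Fin 2, ∑ p : Fin 2, (|B.det|⁻¹ * B i p * B j q) * Xihat y p q)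
      (fun y => Ξ y i j) _ ?_ ?_ j
    · exact HasFDerivAt.fun_sum fun q _ => HasFDerivAt.fun_sum fun p _ => by
        simpa [mul_assoc] using (hE p q).const_mul (|B.det|⁻¹ * B i p * B j q)
    · intro y hy
      show Ξ (F y) i j = _
      rw [hXi y hy]
      simp only [Matrix.smul_apply, Matrix.mul_apply, Matrix.transpose_apply, smul_eq_mul,
        Finset.mul_sum, Finset.sum_mul]
      exact Finset.sum_congr rfl fun q _ => Finset.sum_congr rfl fun p _ => by ring
  -- tau at F xhat
  have htau' : ∀ i, τ (F xhat) i = |B.det|⁻¹ * (∑ k : Fin 2, B i k * tauhat xhat k) := by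
    intro i
    rw [htau xhat hx]
    simp [Matrix.mulVec, dotProduct]
    left; fin_cases i <;> simp
  -- linear functional applied to vector = sum over coordinates
  have hlin : ∀ (D : (Fin 2 → ℝ) →L[ℝ] ℝ) (v : Fin 2 → ℝ),
      D v = ∑ k : Fin 2, v k * D (Pi.single k 1) := by
    intro D v
    have hv : v = ∑ k : Fin 2, v k • (Pi.single k 1 : Fin 2 → ℝ) := by
      funext m
      simp only [Finset.sum_apply, Pi.smul_apply, Pi.single_apply, smul_eq_mul,
        Fin.sum_univ_two]
      fin_cases m <;> simp
    conv_lhs => rw [hv]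
    rw [map_sum]
    simp [smul_eq_mul]
  have hmv : ∀ j k, (B⁻¹.mulVec (Pi.single j 1)) k = B⁻¹ k j := by
    intro j k; simp [Matrix.mulVec_single]
  -- scalar forms
  have hgu' : ∀ i, gradF u (F xhat) i
      = ∑ k : Fin 2, B⁻¹ k i * Du (Pi.single k 1) := by
    intro i
    rw [hgu i, hlin]
    exact Finset.sum_congr rfl fun k _ => by rw [hmv]
  have hDiv : ∀ i, DivMat Ξ (F xhat) i
      = ∑ j : Fin 2, ∑ q : Fin 2, ∑ p : Fin 2,
          |B.det|⁻¹ * B i p * B j q * (∑ m : Fin 2, B⁻¹ m j * E p q (Pi.single m 1)) := by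
    intro i
    simp only [DivMat]
    refine Finset.sum_congr rfl fun j _ => ?_
    rw [hpdXi i j]
    simp only [ContinuousLinearMap.sum_apply, ContinuousLinearMap.smul_apply, smul_eq_mul]
    refine Finset.sum_congr rfl fun q _ => Finset.sum_congr rfl fun p _ => ?_
    rw [hlin (E p q)]
    congr 1
    exact Finset.sum_congr rfl fun m _ => by rw [hmv]
  have hguhat : ∀ i, gradF uhat xhat i = Du (Pi.single i 1) := by
    intro i; simp only [gradF, pd, hDudef]
  have hDivhat : ∀ i, DivMat Xihat xhat i = ∑ j : Fin 2, E i j (Pi.single j 1) := by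
    intro i
    simp only [DivMat, pd, hEdef]
  -- now a pure algebra computation
  simp only [dotProduct, Pi.sub_apply, Fin.sum_univ_two]
  rw [hgu' 0, hgu' 1, hDiv 0, hDiv 1, hguhat 0, hguhat 1, hDivhat 0, hDivhat 1,
    htau' 0, htau' 1]
  simp only [Fin.sum_univ_two]
  generalize Du (Pi.single 0 1) = D0
  generalize Du (Pi.single 1 1) = D1
  generalize E 0 0 (Pi.single 0 1) = X000
  generalize E 0 0 (Pi.single 1 1) = X001
  generalize E 0 1 (Pi.single 0 1) = X010
  generalize E 0 1 (Pi.single 1 1) = X011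
  generalize E 1 0 (Pi.single 0 1) = X100
  generalize E 1 0 (Pi.single 1 1) = X101
  generalize E 1 1 (Pi.single 0 1) = X110
  generalize E 1 1 (Pi.single 1 1) = X111
  generalize tauhat xhat 0 = t0
  generalize tauhat xhat 1 = t1
  have e00 : B⁻¹ 0 0 = B.det⁻¹ * B 1 1 := by
    rw [Matrix.inv_def, Matrix.adjugate_fin_two]
    simp [Ring.inverse_eq_inv']
  have e01 : B⁻¹ 0 1 = B.det⁻¹ * (-B 0 1) := by
    rw [Matrix.inv_def, Matrix.adjugate_fin_two]
    simp [Ring.inverse_eq_inv']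
  have e10 : B⁻¹ 1 0 = B.det⁻¹ * (-B 1 0) := by
    rw [Matrix.inv_def, Matrix.adjugate_fin_two]
    simp [Ring.inverse_eq_inv']
  have e11 : B⁻¹ 1 1 = B.det⁻¹ * B 0 0 := by
    rw [Matrix.inv_def, Matrix.adjugate_fin_two]
    simp [Ring.inverse_eq_inv']
  rw [e00, e01, e10, e11]
  rw [Matrix.det_fin_two] at hd hs ⊢
  field_simp
  ring
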